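/- The 16×16 matrix S_16 with entries e^{2πi N_{jk}/8}, where N is the explicit 16×16 integer matrix arising from the set A_{G_3} = {0,2/8} × {0,1/8,2/8,3/8} × {0,1/8} and the perturbed spectrum S'_{G_3} in G_3 = Z_4 × Z_8 × Z_8, is a complex Hadamard matrix. -/

import Mathlib

open Matrix Complex Real

/-- A complex Hadamard matrix: all entries unimodular and rows pairwise orthogonal. -/
def IsCHadamard {ι : Type*} [Fintype ι] [DecidableEq ι] (H : Matrix ι ι ℂ) : Prop :=
  (∀ i j, ‖H i j‖ = 1) ∧ H * Hᴴ = (Fintype.card ι : ℂ) • 1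

/-- The integer matrix `N = S'_{G₃}·A_{G₃} mod 8` arising from the Szabó-type
construction in `G₃ = Z₄ × Z₈ × Z₈`. -/
def N16 : Matrix (Fin 16) (Fin 16) ℕ :=
  !![0,0,0,0,0,0,0,0,0,0,0,0,0,0,0,0;
     0,4,1,5,2,6,3,7,0,4,1,5,2,6,3,7;
     0,4,3,7,6,2,1,5,0,4,3,7,6,2,1,5;
     0,0,4,4,0,0,4,4,0,0,4,4,0,0,4,4;
     0,4,5,1,2,6,7,3,0,4,5,1,2,6,7,3;
     0,0,6,6,4,4,2,2,0,0,6,6,4,4,2,2;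
     0,4,7,3,6,2,5,1,0,4,7,3,6,2,5,1;
     0,0,2,2,4,4,6,6,2,2,4,4,6,6,0,0;
     0,1,0,1,0,1,0,1,4,5,4,5,4,5,4,5;
     0,5,0,5,0,5,0,5,4,1,4,1,4,1,4,1;
     0,4,2,6,4,0,6,2,4,0,6,2,0,4,2,6;
     0,0,4,4,0,0,4,4,4,4,0,0,4,4,0,0;
     0,4,4,0,0,4,4,0,4,0,0,4,4,0,0,4;
     0,0,6,6,4,4,2,2,4,4,2,2,0,0,6,6;
     0,4,6,2,4,0,2,6,4,0,2,6,0,4,6,2;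
     0,0,2,2,4,4,6,6,6,6,0,0,2,2,4,4]

/-- Integer-tuple representation of `ω ^ n` in the basis `1, ω, ω², ω³` where
`ω` is a primitive 8th root of unity. -/
def rep (n : ℕ) : ℤ × ℤ × ℤ × ℤ :=
  if n % 8 = 0 then (1,0,0,0) else if n % 8 = 1 then (0,1,0,0)
  else if n % 8 = 2 then (0,0,1,0) else if n % 8 = 3 then (0,0,0,1)
  else if n % 8 = 4 then (-1,0,0,0) else if n % 8 = 5 then (0,-1,0,0)
  else if n % 8 = 6 then (0,0,-1,0) else (0,0,0,-1)

/-- Evaluation of a tuple at `ω`. -/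
noncomputable def ev (ω : ℂ) (p : ℤ × ℤ × ℤ × ℤ) : ℂ :=
  (p.1 : ℂ) + (p.2.1 : ℂ) * ω + (p.2.2.1 : ℂ) * ω ^ 2 + (p.2.2.2 : ℂ) * ω ^ 3

lemma ev_rep (ω : ℂ) (h4 : ω ^ 4 = -1) : ∀ n : ℕ, ev ω (rep n) = ω ^ n := by
  have h8 : ω ^ 8 = 1 := by
    have : ω ^ 8 = (ω ^ 4) ^ 2 := by ring
    rw [this, h4]; ring
  intro n
  induction n using Nat.strong_induction_on with
  | _ n ih =>
    rcases lt_or_ge n 8 with h | h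
    · interval_cases n
      · simp [rep, ev]
      · simp [rep, ev]
      · simp [rep, ev]
      · simp [rep, ev]
      · simp only [rep, ev]; norm_num; linear_combination -h4
      · simp only [rep, ev]; norm_num; linear_combination -ω * h4
      · simp only [rep, ev]; norm_num; linear_combination -ω ^ 2 * h4
      · simp only [rep, ev]; norm_num; linear_combination -ω ^ 3 * h4
    · have h1 : rep n = rep (n - 8) := by
        unfold rep
        have : n % 8 = (n - 8) % 8 := by omega
        rw [this]
      have h2 : n = (n - 8) + 8 := by omega
      rw [h1, ih (n - 8) (by omega)]
      conv_rhs => rw [h2]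
      rw [pow_add, h8, mul_one]

lemma key : ∀ j k : Fin 16,
    (∑ m : Fin 16, rep (N16 j m + (8 - N16 k m))) =
      if j = k then ((16,0,0,0) : ℤ × ℤ × ℤ × ℤ) else 0 := by decide

lemma N16_le : ∀ j k : Fin 16, N16 j k ≤ 8 := by
  intro j k; fin_cases j <;> fin_cases k <;> decide

/-- The matrix `S₁₆` with entries `e^{2πi·N_{jk}/8}` is a complex Hadamard matrix. -/
theorem S16_isHadamard :
    IsCHadamard (Matrix.of fun j k : Fin 16 =>
      Complex.exp (2 * π * Complex.I * (N16 j k : ℂ) / 8)) := by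
  set ω : ℂ := Complex.exp (2 * π * Complex.I / 8) with hω
  have hpow : ∀ n : ℕ, Complex.exp (2 * π * Complex.I * (n : ℂ) / 8) = ω ^ n := by
    intro n
    rw [hω, ← Complex.exp_nat_mul]
    ring_nf
  have habs : ‖ω‖ = 1 := by
    rw [hω, show (2 * (π : ℂ) * Complex.I / 8) = ((2 * π / 8 : ℝ) : ℂ) * Complex.I by
      push_cast; ring]
    exact Complex.norm_exp_ofReal_mul_I _
  have hω4 : ω ^ 4 = -1 := by
    rw [hω, ← Complex.exp_nat_mul,
      show (4 : ℕ) * (2 * (π : ℂ) * Complex.I / 8) = π * Complex.I by push_cast; ring,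
      Complex.exp_pi_mul_I]
  have hω8 : ω ^ 8 = 1 := by
    have : ω ^ 8 = (ω ^ 4) ^ 2 := by ring
    rw [this, hω4]; ring
  have hωne : ω ≠ 0 := by
    intro h; rw [h] at habs; simp at habs
  have hconj : ∀ n : ℕ, n ≤ 8 → (starRingEnd ℂ) (ω ^ n) = ω ^ (8 - n) := by
    intro n hn
    have h1 : (starRingEnd ℂ) (ω ^ n) * ω ^ n = 1 := by
      rw [← Complex.normSq_eq_conj_mul_self, map_pow]
      have : Complex.normSq ω = 1 := by
        rw [Complex.normSq_eq_norm_sq, habs]; norm_num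
      rw [this]; simp
    have h2 : ω ^ (8 - n) * ω ^ n = 1 := by
      rw [← pow_add]
      have : 8 - n + n = 8 := by omega
      rw [this, hω8]
    exact mul_right_cancel₀ (pow_ne_zero n hωne) (h1.trans h2.symm)
  constructor
  · intro i j
    simp only [Matrix.of_apply, hpow]
    rw [norm_pow, habs, one_pow]
  · ext j k
    rw [Matrix.mul_apply]
    simp only [Matrix.conjTranspose_apply, Matrix.of_apply, hpow, Matrix.smul_apply,
      Matrix.one_apply, Fintype.card_fin]
    have step : ∀ m : Fin 16,
        ω ^ N16 j m * (starRingEnd ℂ) (ω ^ N16 k m) =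
          ev ω (rep (N16 j m + (8 - N16 k m))) := by
      intro m
      rw [hconj _ (N16_le k m), ← pow_add, ev_rep ω hω4]
    calc (∑ m : Fin 16, ω ^ N16 j m * (starRingEnd ℂ) (ω ^ N16 k m))
        = ∑ m : Fin 16, ev ω (rep (N16 j m + (8 - N16 k m))) :=
          Finset.sum_congr rfl fun m _ => step m
      _ = ev ω (∑ m : Fin 16, rep (N16 j m + (8 - N16 k m))) := by
          induction (Finset.univ : Finset (Fin 16)) using Finset.induction_on with
          | empty => simp [ev]
          | insert _ _ hnotmem ih =>
              rw [Finset.sum_insert hnotmem, Finset.sum_insert hnotmem, ih]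
              simp only [ev, Prod.fst_add, Prod.snd_add]
              push_cast; ring
      _ = (16 : ℂ) • if j = k then 1 else 0 := by
          rw [key j k]
          by_cases h : j = k <;> simp [h, ev]
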